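/- Let m≥2 be an integer and let (a_n)_{n∈ℕ} be a real sequence such that |a_n| ≤ C₀·ℰ_n^{−m} for some C₀>0 and all n. Then there exist constants c₀, c₁, …, c_{m−2} ∈ ℝ such that lim_{t→0⁺} t^{−(m−2)}·(Σ_{n=0}^∞ e^{−tℰ_n}·a_n − Σ_{j=0}^{m−2} c_j·t^j) = 0; that is, Σ_{n=0}^∞ e^{−tℰ_n}·a_n admits the asymptotic expansion c₀ + c₁t + … + c_{m−2}t^{m−2} + o(t^{m−2}) as t→0⁺. -/

import Mathlib

open Real Set Filter Topology


private lemma expTaylorDeriv (k : ℕ) (y : ℝ) :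
    HasDerivAt (fun y : ℝ => Real.exp (-y) - ∑ j ∈ Finset.range (k+1), (-y)^j / j.factorial)
      (-(Real.exp (-y) - ∑ j ∈ Finset.range k, (-y)^j / j.factorial)) y := by
  have h1 : HasDerivAt (fun y : ℝ => Real.exp (-y)) (-Real.exp (-y)) y := by
    exact ((Real.hasDerivAt_exp (-y)).comp y (hasDerivAt_neg y)).congr_deriv (by ring)
  have h2 : HasDerivAt (fun y : ℝ => ∑ j ∈ Finset.range (k+1), (-y)^j / j.factorial)
      (∑ j ∈ Finset.range (k+1), ((j : ℝ) * (-y)^(j-1) * (-1)) / j.factorial) y := by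
    apply HasDerivAt.fun_sum
    intro j hj
    exact (((hasDerivAt_pow j (-y)).comp y (hasDerivAt_neg y))).div_const _
  have hsum : (∑ j ∈ Finset.range (k+1), ((j:ℝ) * (-y)^(j-1) * (-1)) / j.factorial)
      = -(∑ j ∈ Finset.range k, (-y)^j / j.factorial) := by
    rw [Finset.sum_range_succ', ← Finset.sum_neg_distrib]
    simp only [Nat.cast_zero, zero_mul, pow_zero, Nat.factorial_zero, Nat.cast_one, zero_div,
      add_zero]
    refine Finset.sum_congr rfl fun j _ => ?_
    rw [Nat.factorial_succ]
    push_cast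
    have : (j:ℝ) + 1 ≠ 0 := by positivity
    field_simp
  have := h1.fun_sub h2
  rw [hsum] at this
  exact this.congr_deriv (by ring)

private lemma expTaylorBound : ∀ (k : ℕ) (x : ℝ), 0 ≤ x →
    |Real.exp (-x) - ∑ j ∈ Finset.range k, (-x)^j / j.factorial| ≤ x^k / k.factorial := by
  intro k
  induction k with
  | zero =>
    intro x hx
    simp only [Finset.range_zero, Finset.sum_empty, sub_zero, pow_zero, Nat.factorial_zero,
      Nat.cast_one, div_one, Real.abs_exp]
    exact Real.exp_le_one_iff.mpr (by linarith)
  | succ k ih =>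
    intro x hx
    set F : ℝ → ℝ := fun y => Real.exp (-y) - ∑ j ∈ Finset.range (k+1), (-y)^j / j.factorial
      with hFdef
    have hF0 : F 0 = 0 := by
      simp [hFdef, Finset.sum_range_succ']
    have key : ∀ ε : ℝ, ε = 1 ∨ ε = -1 → ε * F x ≤ x^(k+1) / (k+1).factorial := by
      intro ε hε
      set G : ℝ → ℝ := fun y => y^(k+1) / (k+1).factorial - ε * F y with hGdef
      have hGd : ∀ y : ℝ, HasDerivAt G
          (y^k * (k+1) / (k+1).factorial
            - ε * -(Real.exp (-y) - ∑ j ∈ Finset.range k, (-y)^j / j.factorial)) y := by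
        intro y
        have := ((hasDerivAt_pow (k+1) y).div_const ((k+1).factorial : ℝ)).fun_sub
          ((expTaylorDeriv k y).const_mul ε)
        exact this.congr_deriv (by push_cast [Nat.add_sub_cancel]; ring)
      have hmono : MonotoneOn G (Set.Ici (0:ℝ)) := by
        apply monotoneOn_of_deriv_nonneg (convex_Ici 0)
        · exact fun y _ => ((hGd y).continuousAt).continuousWithinAt
        · exact fun y _ => ((hGd y).differentiableAt).differentiableWithinAt
        · intro y hy
          rw [interior_Ici] at hy
          rw [(hGd y).deriv]
          have hb := ih y (le_of_lt hy)
          have hfac : (0:ℝ) < (k+1).factorial := by positivity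
          have h1 : |ε * -(Real.exp (-y) - ∑ j ∈ Finset.range k, (-y)^j / j.factorial)|
              ≤ y^k / k.factorial := by
            rcases hε with h | h <;> rw [h] <;>
              simpa [abs_neg, abs_sub_comm (Real.exp (-y))] using hb
          have h2 : y^k * (k+1) / (k+1).factorial = y^k / k.factorial := by
            rw [Nat.factorial_succ]
            push_cast
            have : (k:ℝ) + 1 ≠ 0 := by positivity
            have : (k.factorial : ℝ) ≠ 0 := by positivity
            field_simp
          rw [h2]
          linarith [le_abs_self (ε * -(Real.exp (-y) - ∑ j ∈ Finset.range k, (-y)^j / j.factorial)), h1]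
      have := hmono (Set.self_mem_Ici) (Set.mem_Ici.mpr hx) hx
      simp only [hGdef, hF0, mul_zero, sub_zero, ne_eq] at this
      have h0 : (0:ℝ)^(k+1) / (k+1).factorial = 0 := by simp
      rw [h0] at this
      linarith
    have h1 := key 1 (Or.inl rfl)
    have h2 := key (-1) (Or.inr rfl)
    rw [abs_le]
    constructor <;> [linarith; linarith]


theorem stmt17
    (ω : ℝ) (hω : 0 < ω) (m : ℕ) (hm : 2 ≤ m)
    (a : ℕ → ℝ) (C₀ : ℝ) (hC₀ : 0 < C₀)
    (ha : ∀ n : ℕ, |a n| ≤ C₀ / (ω * (n + 1/2))^m) :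
    ∃ c : ℕ → ℝ,
      Tendsto (fun t : ℝ =>
          ((∑' n : ℕ, Real.exp (-(t * (ω * (n + 1/2)))) * a n)
            - ∑ j ∈ Finset.range (m-1), c j * t^j) / t^(m-2))
        (𝓝[>] 0) (𝓝 0) := by
  obtain ⟨p, rfl⟩ : ∃ p, m = p + 2 := ⟨m - 2, by omega⟩
  set E : ℕ → ℝ := fun n => ω * (n + 1/2) with hEdef
  have hEpos : ∀ n, 0 < E n := fun n => mul_pos hω (by positivity)
  have hEhalf : ∀ n, ω / 2 ≤ E n := by
    intro n
    have hn : (0:ℝ) ≤ n := Nat.cast_nonneg n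
    simp only [hEdef]
    nlinarith
  have hElow : ∀ n : ℕ, ω * (n+1) / 2 ≤ E n := by
    intro n
    have hn : (0:ℝ) ≤ n := Nat.cast_nonneg n
    simp only [hEdef]
    nlinarith
  -- summability of 1/E n ^ 2
  have hS2 : Summable (fun n : ℕ => 1 / E n ^ 2) := by
    have h0 : Summable (fun n : ℕ => 1 / ((n:ℝ)+1) ^ 2) := by
      have := (summable_nat_add_iff (f := fun n : ℕ => 1 / (n:ℝ)^2) 1).mpr
        (summable_one_div_nat_pow.mpr one_lt_two)
      simpa using this
    apply Summable.of_nonneg_of_le (fun n => by positivity) (fun n => ?_)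
      (h0.mul_left (4 / ω^2))
    have h1 := hElow n
    have h2 : (0:ℝ) < ω * (n+1)/2 := by positivity
    have h3 : (ω * ((n:ℝ)+1)/2)^2 ≤ E n ^ 2 := by nlinarith [hEpos n]
    have h4 : (4/ω^2) * (1/((n:ℝ)+1)^2) = 1/(ω*((n:ℝ)+1)/2)^2 := by
      field_simp
      ring
    rw [h4]
    exact one_div_le_one_div_of_le (by positivity) h3
  -- master bound
  have hbound : ∀ j, j ≤ p → ∀ n, |E n ^ j * a n| ≤ (C₀ / (ω/2)^(p-j)) * (1/E n^2) := by
    intro j hj n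
    have h1 : |E n ^ j * a n| = E n ^ j * |a n| := by
      rw [abs_mul, abs_of_nonneg (pow_nonneg (hEpos n).le j)]
    have h2 : E n ^ j * |a n| ≤ E n ^ j * (C₀ / E n ^ (p+2)) :=
      mul_le_mul_of_nonneg_left (ha n) (pow_nonneg (hEpos n).le j)
    have h4 : (ω/2)^(p-j) ≤ E n ^ (p-j) := pow_le_pow_left₀ (by positivity) (hEhalf n) _
    have h5 : E n ^ j * ((ω/2)^(p-j) * E n^2) ≤ E n ^ (p+2) := by
      calc E n ^ j * ((ω/2)^(p-j) * E n^2) ≤ E n ^ j * (E n^(p-j) * E n^2) := by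
            apply mul_le_mul_of_nonneg_left _ (pow_nonneg (hEpos n).le j)
            exact mul_le_mul_of_nonneg_right h4 (by positivity)
        _ = E n ^ (p+2) := by
            rw [← pow_add, ← pow_add]
            congr 1
            omega
    have h6 : E n ^ j * (C₀ / E n ^ (p+2)) ≤ C₀ / (ω/2)^(p-j) * (1/E n^2) := by
      rw [div_mul_div_comm, mul_one, ← mul_div_assoc,
        div_le_div_iff₀ (by positivity) (by positivity)]
      nlinarith [mul_le_mul_of_nonneg_left h5 hC₀.le]
    rw [h1]
    exact h2.trans h6
  -- summability facts
  have hsumm : ∀ j, j ≤ p → Summable (fun n => E n ^ j * a n) := by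
    intro j hj
    exact Summable.of_norm_bounded (hS2.mul_left (C₀ / (ω/2)^(p-j)))
      (fun n => by rw [Real.norm_eq_abs]; exact hbound j hj n)
  have hsumexp : ∀ t : ℝ, 0 ≤ t → Summable (fun n => Real.exp (-(t * E n)) * a n) := by
    intro t ht
    apply Summable.of_norm_bounded (hS2.mul_left (C₀ / (ω/2)^(p-0)))
    intro n
    have h1 : |Real.exp (-(t * E n)) * a n| ≤ |a n| := by
      rw [abs_mul, Real.abs_exp]
      have : Real.exp (-(t * E n)) ≤ 1 :=
        Real.exp_le_one_iff.mpr (by nlinarith [hEpos n])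
      nlinarith [abs_nonneg (a n)]
    have h2 := hbound 0 (Nat.zero_le p) n
    simp only [pow_zero, one_mul] at h2
    rw [Real.norm_eq_abs]
    exact h1.trans h2
  have hsummj : ∀ t : ℝ, ∀ j, j ≤ p →
      Summable (fun n => (-(t * E n))^j / j.factorial * a n) := by
    intro t j hj
    have : (fun n => (-(t * E n))^j / j.factorial * a n)
        = fun n => ((-t)^j / j.factorial) * (E n ^ j * a n) := by
      funext n
      rw [show -(t * E n) = (-t) * E n by ring, mul_pow]
      ring
    rw [this]
    exact (hsumm j hj).mul_left _
  -- the constants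
  refine ⟨fun j => (-1)^j / j.factorial * ∑' n, E n ^ j * a n, ?_⟩
  set c : ℕ → ℝ := fun j => (-1)^j / j.factorial * ∑' n, E n ^ j * a n with hcdef
  -- key algebraic identity
  have hkey : ∀ t : ℝ, 0 < t →
      (∑' n, Real.exp (-(t * E n)) * a n) - ∑ j ∈ Finset.range (p+1), c j * t^j
        = ∑' n, (Real.exp (-(t * E n))
            - ∑ j ∈ Finset.range (p+1), (-(t * E n))^j / j.factorial) * a n := by
    intro t ht
    have hswap : ∑ j ∈ Finset.range (p+1), c j * t^j
        = ∑' n, ∑ j ∈ Finset.range (p+1), (-(t * E n))^j / j.factorial * a n := by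
      rw [Summable.tsum_finsetSum (fun j hj => hsummj t j (Nat.lt_succ_iff.mp (Finset.mem_range.mp hj)))]
      refine Finset.sum_congr rfl fun j hj => ?_
      have heq : ∀ n, (-(t * E n))^j / j.factorial * a n
          = ((-t)^j / j.factorial) * (E n ^ j * a n) := by
        intro n
        rw [show -(t * E n) = (-t) * E n by ring, mul_pow]
        ring
      rw [tsum_congr heq, tsum_mul_left, hcdef]
      rw [neg_pow]
      ring
    rw [hswap, ← Summable.tsum_sub (hsumexp t ht.le)
      (summable_sum (fun j hj => hsummj t j (Nat.lt_succ_iff.mp (Finset.mem_range.mp hj))))]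
    refine tsum_congr fun n => ?_
    rw [sub_mul, Finset.sum_mul]
  -- the two-sided Taylor bound
  have hb2 : ∀ x : ℝ, 0 ≤ x →
      |Real.exp (-x) - ∑ j ∈ Finset.range (p+1), (-x)^j / j.factorial|
        ≤ 2 * (x^p / p.factorial) := by
    intro x hx
    have h2 := expTaylorBound p x hx
    rw [Finset.sum_range_succ]
    have h3 : |(-x)^p / p.factorial| = x^p / p.factorial := by
      rw [abs_div, abs_pow, abs_neg, abs_of_nonneg hx, Nat.abs_cast]
    calc |Real.exp (-x) - (∑ j ∈ Finset.range p, (-x)^j / j.factorial + (-x)^p / p.factorial)|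
        ≤ |Real.exp (-x) - ∑ j ∈ Finset.range p, (-x)^j / j.factorial|
          + |(-x)^p / p.factorial| := by
          rw [sub_add_eq_sub_sub]
          exact abs_sub _ _
      _ ≤ 2 * (x^p / p.factorial) := by rw [h3]; linarith
  -- dominated convergence
  set f : ℝ → ℕ → ℝ := fun t n =>
    (Real.exp (-(t * E n)) - ∑ j ∈ Finset.range (p+1), (-(t * E n))^j / j.factorial)
      * a n / t^p with hfdef
  have hDC : Tendsto (fun t => ∑' n, f t n) (𝓝[>] (0:ℝ)) (𝓝 (∑' _ : ℕ, (0:ℝ))) := by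
    apply tendsto_tsum_of_dominated_convergence
      (bound := fun n => (2 * C₀ / p.factorial) * (1 / E n ^ 2))
    · exact hS2.mul_left _
    · -- pointwise limits
      intro n
      apply squeeze_zero_norm' (a := fun t : ℝ => t * (E n ^ (p+1) * |a n| / (p+1).factorial))
      · filter_upwards [self_mem_nhdsWithin] with t ht
        have ht' : (0:ℝ) < t := ht
        have hx : 0 ≤ t * E n := by positivity
        have h1 := expTaylorBound (p+1) (t * E n) hx
        have h2 : |f t n| ≤ (t * E n)^(p+1) / (p+1).factorial * |a n| / t^p := by
          rw [hfdef]
          simp only [abs_div, abs_mul]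
          rw [abs_of_pos (pow_pos ht' p)]
          apply div_le_div_of_nonneg_right _ (pow_pos ht' p).le
          exact mul_le_mul_of_nonneg_right h1 (abs_nonneg _)
        have h3 : (t * E n)^(p+1) / (p+1).factorial * |a n| / t^p
            = t * (E n ^ (p+1) * |a n| / (p+1).factorial) := by
          rw [mul_pow, pow_succ]
          field_simp
        rw [Real.norm_eq_abs]
        rw [h3] at h2
        exact h2
      · have : Tendsto (fun t : ℝ => t * (E n ^ (p+1) * |a n| / (p+1).factorial))
            (𝓝[>] (0:ℝ)) (𝓝 (0 * (E n ^ (p+1) * |a n| / (p+1).factorial))) :=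
          (tendsto_id.mono_left nhdsWithin_le_nhds).mul_const _
        simpa using this
    · -- uniform bound
      filter_upwards [self_mem_nhdsWithin] with t ht
      intro n
      have ht' : (0:ℝ) < t := ht
      have hx : 0 ≤ t * E n := by positivity
      have h1 := hb2 (t * E n) hx
      have h2 : |f t n| ≤ 2 * ((t * E n)^p / p.factorial) * |a n| / t^p := by
        rw [hfdef]
        simp only [abs_div, abs_mul]
        rw [abs_of_pos (pow_pos ht' p)]
        apply div_le_div_of_nonneg_right _ (pow_pos ht' p).le
        exact mul_le_mul_of_nonneg_right h1 (abs_nonneg _)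
      have h3 : 2 * ((t * E n)^p / p.factorial) * |a n| / t^p
          = (2 / p.factorial) * (E n ^ p * |a n|) := by
        rw [mul_pow]
        field_simp
      rw [h3] at h2
      have h4 : E n ^ p * |a n| = |E n ^ p * a n| := by
        rw [abs_mul, abs_of_nonneg (pow_nonneg (hEpos n).le p)]
      have h5 := hbound p le_rfl n
      simp only [Nat.sub_self, pow_zero, div_one] at h5
      rw [Real.norm_eq_abs]
      calc |f t n| ≤ (2 / p.factorial) * (E n ^ p * |a n|) := h2
        _ ≤ (2 / p.factorial) * (C₀ * (1 / E n ^ 2)) := by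
            rw [h4]
            apply mul_le_mul_of_nonneg_left _ (by positivity)
            exact h5
        _ = (2 * C₀ / p.factorial) * (1 / E n ^ 2) := by ring
  -- conclude
  have hDC0 : Tendsto (fun t => ∑' n, f t n) (𝓝[>] (0:ℝ)) (𝓝 0) := by simpa using hDC
  refine Tendsto.congr' ?_ hDC0
  filter_upwards [self_mem_nhdsWithin] with t ht
  have ht' : (0:ℝ) < t := ht
  show ∑' n, f t n
      = ((∑' n : ℕ, Real.exp (-(t * E n)) * a n)
          - ∑ j ∈ Finset.range (p+1), c j * t^j) / t^p
  rw [hkey t ht', ← tsum_div_const]
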